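/- Let (a,b,c) be an ABC-solution, n ≥ 2 an even integer, and (A,B,C) = Θ_n(a,b,c). Then log rad(|A·B·C|) ≤ (n−1)·log c + log rad(|a·b·c|) + log(2n); equivalently, rad(|A·B·C|) ≤ 2n·c^{n−1}·rad(|a·b·c|). -/
import Mathlib


/-- An ABC-solution: distinct, pairwise coprime integers with a+b+c = 0, a < 0, b < 0. -/
def IsABCSolution (a b c : ℤ) : Prop :=
  a + b + c = 0 ∧ a < 0 ∧ b < 0 ∧
  a ≠ b ∧ b ≠ c ∧ a ≠ c ∧
  IsCoprime a b ∧ IsCoprime b c ∧ IsCoprime a c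

/-- The radical of a natural number: the product of its distinct prime factors. -/
def rad (n : ℕ) : ℕ := ∏ p ∈ n.primeFactors, p

/-- The quality function f((a,b,c),ε) = log c − (1+ε)·log rad(|a·b·c|). -/
noncomputable def fABC (a b c : ℤ) (ε : ℝ) : ℝ :=
  Real.log (c : ℝ) - (1 + ε) * Real.log (rad (a * b * c).natAbs : ℝ)

/-- The operation Θ_n on ABC-solutions, with m = n if c is even and m = 0 otherwise.
The divisions are exact integer divisions. -/
def theta (n : ℕ) (a b c : ℤ) : ℤ × ℤ × ℤ :=
  let m : ℕ := if 2 ∣ c then n else 0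
  (-((a - b) ^ n / 2 ^ m), -((c ^ n - (a - b) ^ n) / 2 ^ m), c ^ n / 2 ^ m)

lemma rad_pos (n : ℕ) : 0 < rad n :=
  Finset.prod_pos fun p hp => (Nat.prime_of_mem_primeFactors hp).pos

lemma rad_dvd (n : ℕ) : rad n ∣ n := Nat.prod_primeFactors_dvd n

lemma rad_le {n : ℕ} (hn : n ≠ 0) : rad n ≤ n :=
  Nat.le_of_dvd (Nat.pos_of_ne_zero hn) (rad_dvd n)

lemma rad_dvd_rad {m n : ℕ} (h : m ∣ n) (hn : n ≠ 0) : rad m ∣ rad n :=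
  Finset.prod_dvd_prod_of_subset _ _ _ (Nat.primeFactors_mono h hn)

lemma rad_mul_dvd (m n : ℕ) : rad (m * n) ∣ rad m * rad n := by
  rcases eq_or_ne m 0 with rfl | hm
  · simp [rad]
  rcases eq_or_ne n 0 with rfl | hn
  · simp [rad]
  rw [rad, rad, rad, Nat.primeFactors_mul hm hn]
  calc ∏ p ∈ m.primeFactors ∪ n.primeFactors, p
      = (∏ p ∈ m.primeFactors, p) * ∏ p ∈ n.primeFactors \ m.primeFactors, p := by
        rw [← Finset.prod_union Finset.disjoint_sdiff, Finset.union_sdiff_self_eq_union]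
    _ ∣ _ := mul_dvd_mul_left _ (Finset.prod_dvd_prod_of_subset _ _ _ Finset.sdiff_subset)

lemma rad_mul_coprime {m n : ℕ} (h : Nat.Coprime m n) : rad (m * n) = rad m * rad n := by
  rw [rad, rad, rad, Nat.Coprime.primeFactors_mul h,
    Finset.prod_union h.disjoint_primeFactors]

lemma rad_pow (n : ℕ) {k : ℕ} (hk : k ≠ 0) : rad (n ^ k) = rad n := by
  rw [rad, rad, Nat.primeFactors_pow n hk]

lemma rad_four : rad 4 = 2 := by
  have h4 : (4 : ℕ) = 2 ^ 2 := rfl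
  rw [h4, rad_pow 2 two_ne_zero, rad, Nat.Prime.primeFactors Nat.prime_two,
    Finset.prod_singleton]


/-- log rad(|ABC|) ≤ (n−1)·log c + log rad(|abc|) + log 2n;
equivalently rad(|ABC|) ≤ 2n·c^{n−1}·rad(|abc|). -/
theorem log_rad_theta_le' (a b c : ℤ) (h : IsABCSolution a b c)
    (n : ℕ) (hn : 2 ≤ n) (hev : Even n) :
    Real.log (rad ((theta n a b c).1 * (theta n a b c).2.1 *
        (theta n a b c).2.2).natAbs : ℝ) ≤
      ((n : ℝ) - 1) * Real.log (c : ℝ) + Real.log (rad (a * b * c).natAbs : ℝ) +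
        Real.log (2 * n) ∧
    ((rad ((theta n a b c).1 * (theta n a b c).2.1 *
        (theta n a b c).2.2).natAbs : ℤ)) ≤
      2 * n * c ^ (n - 1) * (rad (a * b * c).natAbs : ℤ) := by
  obtain ⟨hsum, ha, hb, hab, hbc, hac, cab, cbc, cac⟩ := h
  have hc : 0 < c := by omega
  set d : ℤ := a - b with hd
  have hd0 : d ≠ 0 := sub_ne_zero.mpr hab
  set m : ℕ := if (2:ℤ) ∣ c then n else 0 with hm
  -- divisibility of the pieces by 2^m
  have hdvdc : (2:ℤ)^m ∣ c ^ n := by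
    rcases em ((2:ℤ) ∣ c) with h2 | h2
    · rw [hm, if_pos h2]; exact pow_dvd_pow_of_dvd h2 n
    · rw [hm, if_neg h2]; simp
  have hdvdd : (2:ℤ)^m ∣ d ^ n := by
    rcases em ((2:ℤ) ∣ c) with h2 | h2
    · rw [hm, if_pos h2]
      have hoa : ¬ (2:ℤ) ∣ a := fun hda => by
        have := cac.isUnit_of_dvd' hda h2
        rw [Int.isUnit_iff] at this; omega
      have hob : ¬ (2:ℤ) ∣ b := fun hdb => by
        have := cbc.isUnit_of_dvd' hdb h2
        rw [Int.isUnit_iff] at this; omega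
      have h2d : (2:ℤ) ∣ d := by omega
      exact pow_dvd_pow_of_dvd h2d n
    · rw [hm, if_neg h2]; simp
  have hdvds : (2:ℤ)^m ∣ c ^ n - d ^ n := dvd_sub hdvdc hdvdd
  -- component equations
  set A : ℤ := (theta n a b c).1 with hAdef
  set B : ℤ := (theta n a b c).2.1 with hBdef
  set C : ℤ := (theta n a b c).2.2 with hCdef
  have hA : A * 2 ^ m = -(d ^ n) := by
    rw [hAdef]
    show -((a - b) ^ n / 2 ^ (if (2:ℤ) ∣ c then n else 0)) * 2 ^ m = -(d ^ n)
    rw [← hm, ← hd, neg_mul, Int.ediv_mul_cancel hdvdd]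
  have hB : B * 2 ^ m = -(c ^ n - d ^ n) := by
    rw [hBdef]
    show -((c ^ n - (a - b) ^ n) / 2 ^ (if (2:ℤ) ∣ c then n else 0)) * 2 ^ m
        = -(c ^ n - d ^ n)
    rw [← hm, ← hd, neg_mul, Int.ediv_mul_cancel hdvds]
  have hC : C * 2 ^ m = c ^ n := by
    rw [hCdef]
    show c ^ n / 2 ^ (if (2:ℤ) ∣ c then n else 0) * 2 ^ m = c ^ n
    rw [← hm, Int.ediv_mul_cancel hdvdc]
  -- the factorization c^n - d^n = 4ab·S
  obtain ⟨k, hk⟩ := hev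
  have hk1 : 1 ≤ k := by omega
  set S : ℤ := ∑ i ∈ Finset.range k, (c ^ 2) ^ i * (d ^ 2) ^ (k - 1 - i) with hS
  have hn2k : 2 * k = n := by omega
  have hgeom : S * (c ^ 2 - d ^ 2) = c ^ n - d ^ n := by
    rw [hS, geom_sum₂_mul, ← pow_mul, ← pow_mul, hn2k]
  have hcd2 : c ^ 2 - d ^ 2 = 4 * (a * b) := by
    have hc' : c = -(a + b) := by omega
    rw [hc', hd]; ring
  have hfact : c ^ n - d ^ n = 4 * (a * b) * S := by
    rw [← hgeom, hcd2]; ring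
  have hd2c2 : d ^ 2 ≤ c ^ 2 := by nlinarith
  have hSpos : 0 < S := by
    rw [hS]
    apply Finset.sum_pos
    · intro i _
      positivity
    · exact Finset.nonempty_range_iff.mpr (by omega)
  -- natAbs bookkeeping
  set an := a.natAbs with han
  set bn := b.natAbs with hbn
  set cn := c.natAbs with hcn
  set dn := d.natAbs with hdn
  set Sn := S.natAbs with hSn
  have hanz : an ≠ 0 := Int.natAbs_ne_zero.mpr (by omega)
  have hbnz : bn ≠ 0 := Int.natAbs_ne_zero.mpr (by omega)
  have hcnz : cn ≠ 0 := Int.natAbs_ne_zero.mpr (by omega)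
  have hdnz : dn ≠ 0 := Int.natAbs_ne_zero.mpr hd0
  have hSnz : Sn ≠ 0 := Int.natAbs_ne_zero.mpr (by omega)
  have hdncn : dn ≤ cn := by omega
  set N := (A * B * C).natAbs with hN
  have hbig : (A * B * C) * (2 ^ m) ^ 3 = d ^ n * (4 * (a * b) * S) * c ^ n := by
    have : (A * B * C) * (2 ^ m) ^ 3 = (A * 2 ^ m) * (B * 2 ^ m) * (C * 2 ^ m) := by
      ring
    rw [this, hA, hB, hC, hfact]; ring
  have hNat : N * (2 ^ m) ^ 3 = dn ^ n * (4 * (an * bn) * Sn) * cn ^ n := by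
    have h0 := congrArg Int.natAbs hbig
    simp only [Int.natAbs_mul, Int.natAbs_pow, show (2:ℤ).natAbs = 2 from rfl,
      show (4:ℤ).natAbs = 4 from rfl] at h0
    rw [hN, hdn, han, hbn, hcn, hSn, Int.natAbs_mul, Int.natAbs_mul]
    exact h0
  have hRHSz : dn ^ n * (4 * (an * bn) * Sn) * cn ^ n ≠ 0 := by
    exact Nat.mul_ne_zero
      (Nat.mul_ne_zero (pow_ne_zero _ hdnz)
        (Nat.mul_ne_zero (Nat.mul_ne_zero (by norm_num) (Nat.mul_ne_zero hanz hbnz)) hSnz))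
      (pow_ne_zero _ hcnz)
  have hNz : N ≠ 0 := by
    intro h0
    rw [h0, zero_mul] at hNat
    exact hRHSz hNat.symm
  -- radical chain
  have hdvd1 : rad N ∣ rad (dn ^ n * (4 * (an * bn) * Sn) * cn ^ n) := by
    rw [← hNat]
    exact rad_dvd_rad (Dvd.intro _ rfl) (by rw [hNat]; exact hRHSz)
  have hdvd2 : rad (dn ^ n * (4 * (an * bn) * Sn) * cn ^ n)
      ∣ rad dn * (2 * rad (an * bn) * rad Sn) * rad cn := by
    calc rad (dn ^ n * (4 * (an * bn) * Sn) * cn ^ n)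
        ∣ rad (dn ^ n * (4 * (an * bn) * Sn)) * rad (cn ^ n) := rad_mul_dvd _ _
      _ ∣ (rad (dn ^ n) * rad (4 * (an * bn) * Sn)) * rad (cn ^ n) :=
          mul_dvd_mul_right (rad_mul_dvd _ _) _
      _ ∣ (rad (dn ^ n) * (rad (4 * (an * bn)) * rad Sn)) * rad (cn ^ n) :=
          mul_dvd_mul_right (mul_dvd_mul_left _ (rad_mul_dvd _ _)) _
      _ ∣ (rad (dn ^ n) * ((rad 4 * rad (an * bn)) * rad Sn)) * rad (cn ^ n) :=
          mul_dvd_mul_right (mul_dvd_mul_left _ (mul_dvd_mul_right (rad_mul_dvd _ _) _)) _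
      _ = rad dn * (2 * rad (an * bn) * rad Sn) * rad cn := by
          rw [rad_four, rad_pow _ (by omega : n ≠ 0), rad_pow _ (by omega : n ≠ 0)]
  have hPpos : 0 < rad dn * (2 * rad (an * bn) * rad Sn) * rad cn := by
    have := rad_pos dn; have := rad_pos (an * bn); have := rad_pos Sn
    have := rad_pos cn; positivity
  have hle1 : rad N ≤ rad dn * (2 * rad (an * bn) * rad Sn) * rad cn :=
    Nat.le_of_dvd hPpos (hdvd1.trans hdvd2)
  -- bound S
  have hSbound : S ≤ (k : ℤ) * (c ^ 2) ^ (k - 1) := by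
    rw [hS]
    calc ∑ i ∈ Finset.range k, (c ^ 2) ^ i * (d ^ 2) ^ (k - 1 - i)
        ≤ ∑ i ∈ Finset.range k, (c ^ 2) ^ (k - 1) := by
          apply Finset.sum_le_sum
          intro i hi
          rw [Finset.mem_range] at hi
          calc (c ^ 2) ^ i * (d ^ 2) ^ (k - 1 - i)
              ≤ (c ^ 2) ^ i * (c ^ 2) ^ (k - 1 - i) := by
                apply mul_le_mul_of_nonneg_left _ (by positivity)
                exact pow_le_pow_left₀ (sq_nonneg d) hd2c2 _
            _ = (c ^ 2) ^ (k - 1) := by rw [← pow_add]; congr 1; omega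
      _ = (k : ℤ) * (c ^ 2) ^ (k - 1) := by
          rw [Finset.sum_const, Finset.card_range, nsmul_eq_mul]
  have hSZ : ((Sn : ℤ)) = S := Int.natAbs_of_nonneg hSpos.le
  have hcZ : ((cn : ℤ)) = c := Int.natAbs_of_nonneg hc.le
  have hSnbound : Sn ≤ k * cn ^ (n - 2) := by
    have hexp : 2 * (k - 1) = n - 2 := by omega
    have hcast : ((Sn : ℤ)) ≤ ((k * cn ^ (n - 2) : ℕ) : ℤ) := by
      push_cast
      rw [hSZ, hcZ]
      calc S ≤ (k : ℤ) * (c ^ 2) ^ (k - 1) := hSbound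
        _ = (k : ℤ) * c ^ (n - 2) := by rw [← pow_mul, hexp]
    exact_mod_cast hcast
  -- coprimality for the radical of abc
  have hcop : Nat.Coprime (an * bn) cn := by
    apply Nat.Coprime.mul
    · exact Int.isCoprime_iff_gcd_eq_one.mp cac
    · exact Int.isCoprime_iff_gcd_eq_one.mp cbc
  have hradabc : rad (an * bn * cn) = rad (an * bn) * rad cn := rad_mul_coprime hcop
  -- final ℕ bound
  have hfinal : rad N ≤ 2 * n * cn ^ (n - 1) * rad (an * bn * cn) := by
    calc rad N ≤ rad dn * (2 * rad (an * bn) * rad Sn) * rad cn := hle1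
      _ ≤ cn * (2 * rad (an * bn) * (k * cn ^ (n - 2))) * rad cn := by
          apply Nat.mul_le_mul_right
          apply Nat.mul_le_mul
          · exact (rad_le hdnz).trans hdncn
          · exact Nat.mul_le_mul_left _ ((rad_le hSnz).trans hSnbound)
      _ = (2 * k) * (cn ^ (n - 2) * cn) * (rad (an * bn) * rad cn) := by ring
      _ = n * cn ^ (n - 1) * rad (an * bn * cn) := by
          have hpow : cn ^ (n - 2) * cn = cn ^ (n - 1) := by
            rw [← pow_succ]; congr 1; omega
          rw [hpow, hradabc, hn2k]
      _ ≤ 2 * n * cn ^ (n - 1) * rad (an * bn * cn) := by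
          apply Nat.mul_le_mul_right
          apply Nat.mul_le_mul_right
          omega
  have habc : (a * b * c).natAbs = an * bn * cn := by
    rw [Int.natAbs_mul, Int.natAbs_mul]
  have hfinalZ : ((rad N : ℤ)) ≤ 2 * n * c ^ (n - 1) * (rad (a * b * c).natAbs : ℤ) := by
    rw [habc]
    calc ((rad N : ℤ)) ≤ ((2 * n * cn ^ (n - 1) * rad (an * bn * cn) : ℕ) : ℤ) := by
          exact_mod_cast hfinal
      _ = 2 * n * c ^ (n - 1) * (rad (an * bn * cn) : ℤ) := by push_cast [hcZ]; ring
  refine ⟨?_, hfinalZ⟩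
  -- log part
  have hradNpos : (0:ℝ) < (rad N : ℝ) := by exact_mod_cast rad_pos N
  have hcR : (0:ℝ) < (c:ℝ) := by exact_mod_cast hc
  have hradabcpos : (0:ℝ) < (rad (a*b*c).natAbs : ℝ) := by exact_mod_cast rad_pos _
  have hnR : (0:ℝ) < 2 * (n:ℝ) := by positivity
  have hRHSpos : (0:ℝ) < 2 * (n:ℝ) * (c:ℝ) ^ (n-1) * (rad (a*b*c).natAbs : ℝ) := by
    positivity
  have hleR : (rad N : ℝ) ≤ 2 * (n:ℝ) * (c:ℝ) ^ (n-1) * (rad (a*b*c).natAbs : ℝ) := by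
    exact_mod_cast hfinalZ
  calc Real.log (rad N : ℝ)
      ≤ Real.log (2 * (n:ℝ) * (c:ℝ) ^ (n-1) * (rad (a*b*c).natAbs : ℝ)) :=
        Real.log_le_log hradNpos hleR
    _ = Real.log (2 * (n:ℝ)) + Real.log ((c:ℝ) ^ (n-1)) +
        Real.log (rad (a*b*c).natAbs : ℝ) := by
        rw [Real.log_mul (by positivity) (by positivity),
          Real.log_mul (by positivity) (by positivity)]
    _ = ((n:ℝ) - 1) * Real.log (c:ℝ) + Real.log (rad (a*b*c).natAbs : ℝ) +
        Real.log (2 * (n:ℝ)) := by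
        rw [Real.log_pow]
        have : ((n - 1 : ℕ) : ℝ) = (n:ℝ) - 1 := by
          push_cast [Nat.cast_sub (by omega : 1 ≤ n)]; ring
        rw [this]; ring
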